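/- Let p be the empirical label distribution of N images under a classifier, and suppose H(p) > B(δ) where B(δ) = −(1−δ)log₂(1−δ) − δ log₂(δ/(C−1)) with 0 < δ < (C−1)/C. Then no class receives empirical probability at least 1−δ, i.e., maxᵢ pᵢ < 1−δ (contrapositive of the Trojan entropy bound). -/

import Mathlib

open Real Finset

private lemma trojan_F_mono (K : ℝ) (hK : 1 ≤ K) {x y : ℝ} (hx : 0 ≤ x) (hxy : x ≤ y)
    (hy : y < K / (K + 1)) :
    Real.negMulLog (1 - x) + Real.negMulLog x + x * Real.log K ≤
      Real.negMulLog (1 - y) + Real.negMulLog y + y * Real.log K := by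
  have hKpos : (0 : ℝ) < K := by linarith
  have hK1 : (0 : ℝ) < K + 1 := by linarith
  have hKC1 : K / (K + 1) < 1 := by
    rw [div_lt_one hK1]; linarith
  have hmono : StrictMonoOn
      (fun t : ℝ => Real.negMulLog (1 - t) + Real.negMulLog t + t * Real.log K)
      (Set.Icc 0 (K / (K + 1))) := by
    apply strictMonoOn_of_deriv_pos (convex_Icc _ _)
    · fun_prop
    · intro t ht
      rw [interior_Icc] at ht
      obtain ⟨ht0, ht1⟩ := ht
      have h1t : 0 < 1 - t := by
        have : t < 1 := lt_trans ht1 hKC1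
        linarith
      have d1 : HasDerivAt (fun t : ℝ => Real.negMulLog (1 - t))
          (Real.log (1 - t) + 1) t := by
        have h := (Real.hasDerivAt_negMulLog (ne_of_gt h1t)).comp t
          ((hasDerivAt_id t).const_sub 1)
        rw [show Real.log (1 - t) + 1 = (-Real.log (1 - t) - 1) * -1 by ring]
        exact h
      have d2 : HasDerivAt Real.negMulLog (-Real.log t - 1) t :=
        Real.hasDerivAt_negMulLog (ne_of_gt ht0)
      have d3 : HasDerivAt (fun t : ℝ => t * Real.log K) (1 * Real.log K) t :=
        (hasDerivAt_id t).mul_const _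
      have hd : HasDerivAt
          (fun t : ℝ => Real.negMulLog (1 - t) + Real.negMulLog t + t * Real.log K)
          (Real.log (1 - t) + 1 + (-Real.log t - 1) + 1 * Real.log K) t :=
        (d1.add d2).add d3
      rw [hd.deriv]
      have hlt : t < (1 - t) * K := by
        have h := (lt_div_iff₀ hK1).mp ht1
        nlinarith
      have := Real.log_lt_log ht0 hlt
      rw [Real.log_mul (ne_of_gt h1t) (ne_of_gt hKpos)] at this
      linarith
  rcases eq_or_lt_of_le hxy with h | h
  · subst h; exact le_refl _
  · have hxm : x ∈ Set.Icc 0 (K / (K + 1)) := ⟨hx, le_of_lt (lt_of_le_of_lt hxy hy)⟩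
    have hym : y ∈ Set.Icc 0 (K / (K + 1)) := ⟨le_trans hx hxy, le_of_lt hy⟩
    exact (hmono hxm hym h).le

/-- Contrapositive of the Trojan entropy bound: if the entropy score of a
distribution exceeds `B(δ)` with `0 < δ < (C-1)/C`, then no class has
empirical probability at least `1 - δ`. -/
theorem entropy_above_bound_no_dominant_class (C : ℕ) (hC : 2 ≤ C)
    (δ : ℝ) (hδ0 : 0 < δ) (hδ1 : δ < ((C : ℝ) - 1) / C)
    (p : Fin C → ℝ) (hp0 : ∀ i, 0 ≤ p i) (hp1 : ∑ i, p i = 1)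
    (hH : -(1 - δ) * Real.logb 2 (1 - δ) - δ * Real.logb 2 (δ / ((C : ℝ) - 1)) <
      -∑ i, p i * Real.logb 2 (p i)) :
    ∀ i, p i < 1 - δ := by
  intro j
  by_contra hj
  push_neg at hj
  set K : ℝ := (C : ℝ) - 1 with hKdef
  have hC2 : (2 : ℝ) ≤ (C : ℝ) := by exact_mod_cast hC
  have hK1 : (1 : ℝ) ≤ K := by rw [hKdef]; linarith
  have hKpos : (0 : ℝ) < K := by linarith
  have hCpos : (0 : ℝ) < (C : ℝ) := by linarith
  have hδlt1 : δ < 1 := by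
    have : K / (C : ℝ) < 1 := by
      rw [div_lt_one hCpos]; rw [hKdef]; linarith
    exact lt_trans hδ1 this
  have hL2 : (0 : ℝ) < Real.log 2 := Real.log_pos one_lt_two
  -- convert hypothesis to natural log
  have hHn : -(1 - δ) * Real.log (1 - δ) - δ * Real.log (δ / K) <
      ∑ i, Real.negMulLog (p i) := by
    have h2 : (-(1 - δ) * Real.log (1 - δ) - δ * Real.log (δ / K)) / Real.log 2 <
        (∑ i, Real.negMulLog (p i)) / Real.log 2 := by
      convert hH using 1
      · rw [Real.logb, Real.logb]; ring
      · rw [Finset.sum_div, ← Finset.sum_neg_distrib]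
        refine Finset.sum_congr rfl fun i _ => ?_
        rw [Real.negMulLog, Real.logb]
        ring
    exact (div_lt_div_iff_of_pos_right hL2).mp h2
  have hpj1 : p j ≤ 1 := by
    rw [← hp1]
    exact Finset.single_le_sum (fun i _ => hp0 i) (Finset.mem_univ j)
  set q : ℝ := 1 - p j with hqdef
  have hq0 : 0 ≤ q := by rw [hqdef]; linarith
  have hqδ : q ≤ δ := by rw [hqdef]; linarith
  have hsum_erase : ∑ i ∈ Finset.univ.erase j, p i = q := by
    have h := Finset.add_sum_erase Finset.univ p (Finset.mem_univ j)
    rw [hp1] at h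
    rw [hqdef]; linarith
  have hcard : ((Finset.univ.erase j).card : ℝ) = K := by
    rw [Finset.card_erase_of_mem (Finset.mem_univ j), Finset.card_univ, Fintype.card_fin]
    rw [hKdef, Nat.cast_sub (by omega), Nat.cast_one]
  -- Jensen
  have hjensen : ∑ i ∈ Finset.univ.erase j, Real.negMulLog (p i) ≤
      K * Real.negMulLog (q / K) := by
    have hw : ∑ _i ∈ Finset.univ.erase j, (1 / K) = 1 := by
      rw [Finset.sum_const, nsmul_eq_mul, hcard]
      field_simp
    have hc := Real.concaveOn_negMulLog.le_map_sum
      (fun i _ => by positivity : ∀ i ∈ Finset.univ.erase j, (0:ℝ) ≤ 1 / K)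
      hw (fun i _ => hp0 i)
    simp only [smul_eq_mul, ← Finset.mul_sum] at hc
    rw [hsum_erase] at hc
    have h1 : (1 / K) * q = q / K := by ring
    rw [h1] at hc
    calc ∑ i ∈ Finset.univ.erase j, Real.negMulLog (p i)
        = K * ((1 / K) * ∑ i ∈ Finset.univ.erase j, Real.negMulLog (p i)) := by
          field_simp
      _ ≤ K * Real.negMulLog (q / K) := by
          exact mul_le_mul_of_nonneg_left hc (le_of_lt hKpos)
  have hsplit : ∑ i, Real.negMulLog (p i) =
      Real.negMulLog (p j) + ∑ i ∈ Finset.univ.erase j, Real.negMulLog (p i) :=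
    (Finset.add_sum_erase _ _ (Finset.mem_univ j)).symm
  have hpjq : p j = 1 - q := by rw [hqdef]; ring
  rcases eq_or_lt_of_le hq0 with hq | hq
  · -- q = 0 case : entropy is ≤ 0 but the bound is nonneg
    have hql : q = 0 := hq.symm
    have hB1 : 0 ≤ -(1 - δ) * Real.log (1 - δ) := by
      have := Real.negMulLog_nonneg (by linarith : (0:ℝ) ≤ 1 - δ) (by linarith)
      rw [Real.negMulLog] at this
      linarith
    have hB2 : 0 ≤ -(δ * Real.log (δ / K)) := by
      have hle : δ / K ≤ 1 := by
        rw [div_le_one hKpos]; linarith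
      have := Real.log_nonpos (by positivity) hle
      nlinarith
    have hHle : ∑ i, Real.negMulLog (p i) ≤ 0 := by
      rw [hsplit]
      have h1 : Real.negMulLog (p j) = 0 := by
        rw [hpjq, hql]; simp
      have h2 : K * Real.negMulLog (q / K) = 0 := by
        rw [hql]; simp
      linarith [hjensen]
    linarith
  · -- q > 0 case
    have hKmul : K * Real.negMulLog (q / K) = Real.negMulLog q + q * Real.log K := by
      rw [Real.negMulLog, Real.negMulLog,
        Real.log_div (ne_of_gt hq) (ne_of_gt hKpos)]
      field_simp
      ring
    have hmono := trojan_F_mono K hK1 hq0 hqδ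
      (by
        have : K + 1 = (C : ℝ) := by rw [hKdef]; ring
        rw [this]; exact hδ1)
    have hBδ : -(1 - δ) * Real.log (1 - δ) - δ * Real.log (δ / K) =
        Real.negMulLog (1 - δ) + Real.negMulLog δ + δ * Real.log K := by
      rw [Real.negMulLog, Real.negMulLog,
        Real.log_div (ne_of_gt hδ0) (ne_of_gt hKpos)]
      ring
    rw [hsplit, hpjq] at hHn
    rw [hBδ] at hHn
    rw [hKmul] at hjensen
    linarith
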